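/- Let I be an ideal on the positive integers N containing all finite sets. A bounded real sequence x belongs to c₀(I) (i.e., I-lim x = 0) if and only if ξ(|x|) = 0 for every positive continuous linear functional ξ on ℓ∞ with ξ(e) = 1 satisfying ξ(1_A) = 0 for all A ∈ I. Equivalently, c₀(I) ∩ ℓ∞ = {x ∈ ℓ∞ : ∫_N |x| dμ = 0 for all μ ∈ M(I)}. -/

import Mathlib

open Filter Set
open scoped BoundedContinuousFunction

/-- An ideal on `ℕ` (containing all finite sets). -/
def IsIdealOn (I : Set (Set ℕ)) : Prop :=
  (∀ A B : Set ℕ, A ⊆ B → B ∈ I → A ∈ I) ∧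
  (∀ A B : Set ℕ, A ∈ I → B ∈ I → A ∪ B ∈ I) ∧
  (Set.univ : Set ℕ) ∉ I ∧
  (∀ A : Set ℕ, A.Finite → A ∈ I)

/-- The indicator sequence `1_A` of `A ⊆ ℕ`, as a bounded sequence. -/
noncomputable def indBCF (A : Set ℕ) : ℕ →ᵇ ℝ :=
  BoundedContinuousFunction.ofNormedAddCommGroupDiscrete (Set.indicator A 1) 1 (by
    intro n; by_cases h : n ∈ A <;> simp [Set.indicator, h])

/-- The pointwise absolute value `|x|` of a bounded sequence. -/
noncomputable def absBCF (x : ℕ →ᵇ ℝ) : ℕ →ᵇ ℝ :=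
  BoundedContinuousFunction.ofNormedAddCommGroupDiscrete (fun n => |x n|) ‖x‖ (by
    intro n
    simpa [Real.norm_eq_abs, abs_abs] using x.norm_coe_le_norm n)

lemma indBCF_apply (A : Set ℕ) (n : ℕ) : indBCF A n = A.indicator 1 n := rfl

lemma absBCF_apply (x : ℕ →ᵇ ℝ) (n : ℕ) : absBCF x n = |x n| := rfl

/-- Limits along an ultrafilter exist for bounded sequences. -/
lemma ulim_tendsto (U : Ultrafilter ℕ) (y : ℕ →ᵇ ℝ) :
    Tendsto y (U : Filter ℕ) (nhds (limUnder (U : Filter ℕ) y)) := by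
  obtain ⟨a, -, ha⟩ := (isCompact_Icc (a := -‖y‖) (b := ‖y‖)).ultrafilter_le_nhds
    (U.map y) (by
      rw [Ultrafilter.coe_map, le_principal_iff, mem_map]
      have : (⇑y) ⁻¹' Icc (-‖y‖) ‖y‖ = univ := by
        ext n
        simpa [Set.mem_Icc] using abs_le.mp
          (by simpa [Real.norm_eq_abs] using y.norm_coe_le_norm n)
      simp [this])
  have ha' : Tendsto y (U : Filter ℕ) (nhds a) := by rwa [Ultrafilter.coe_map] at ha
  rwa [ha'.limUnder_eq]

/-- The limit along an ultrafilter, as a continuous linear functional on `ℓ∞`. -/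
noncomputable def ulimCLM (U : Ultrafilter ℕ) : (ℕ →ᵇ ℝ) →L[ℝ] ℝ :=
  LinearMap.mkContinuous
    { toFun := fun y => limUnder (U : Filter ℕ) y
      map_add' := fun y z => tendsto_nhds_unique (ulim_tendsto U (y + z))
        (by exact (ulim_tendsto U y).add (ulim_tendsto U z))
      map_smul' := fun c y => tendsto_nhds_unique (ulim_tendsto U (c • y))
        (by simpa using (ulim_tendsto U y).const_mul c) }
    1 (fun y => by
      have h := (isClosed_Icc (a := -‖y‖) (b := ‖y‖)).mem_of_tendsto (ulim_tendsto U y)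
        (Eventually.of_forall fun n => by
          simpa [Set.mem_Icc] using abs_le.mp
            (by simpa [Real.norm_eq_abs] using y.norm_coe_le_norm n))
      simpa [Real.norm_eq_abs, abs_le] using h)

lemma ulimCLM_apply (U : Ultrafilter ℕ) (y : ℕ →ᵇ ℝ) :
    ulimCLM U y = limUnder (U : Filter ℕ) y := rfl

lemma ulimCLM_tendsto (U : Ultrafilter ℕ) (y : ℕ →ᵇ ℝ) :
    Tendsto y (U : Filter ℕ) (nhds (ulimCLM U y)) := ulim_tendsto U y

/-- A bounded real sequence `x` is `I`-convergent to `0` if and only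
if `ξ(|x|) = 0` for every positive continuous linear functional `ξ` on `ℓ∞` with
`ξ 1 = 1` satisfying `ξ(1_A) = 0` for all `A ∈ I`. -/
theorem statement15 (I : Set (Set ℕ)) (hI : IsIdealOn I) (x : ℕ →ᵇ ℝ) :
    (∀ ε : ℝ, 0 < ε → {n : ℕ | ε ≤ |x n|} ∈ I) ↔
      ∀ ξ : (ℕ →ᵇ ℝ) →L[ℝ] ℝ,
        (∀ y : ℕ →ᵇ ℝ, (∀ n : ℕ, 0 ≤ y n) → 0 ≤ ξ y) →
        ξ (indBCF Set.univ) = 1 →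
        (∀ A ∈ I, ξ (indBCF A) = 0) →
        ξ (absBCF x) = 0 := by
  obtain ⟨hdown, hunion, huniv, hfin⟩ := hI
  constructor
  · intro hx ξ hpos h1 hIz
    have h0 : 0 ≤ ξ (absBCF x) := hpos _ (fun n => by rw [absBCF_apply]; exact abs_nonneg _)
    have hle : ∀ ε : ℝ, 0 < ε → ξ (absBCF x) ≤ 0 + ε := by
      intro ε hε
      set A := {n : ℕ | ε ≤ |x n|} with hA
      have hpt : ∀ n, 0 ≤ (ε • indBCF Set.univ + ‖x‖ • indBCF A - absBCF x) n := by
        intro n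
        simp only [BoundedContinuousFunction.coe_sub, BoundedContinuousFunction.coe_add,
          BoundedContinuousFunction.coe_smul, Pi.sub_apply, Pi.add_apply, Pi.smul_apply,
          smul_eq_mul, indBCF_apply, absBCF_apply]
        by_cases hn : n ∈ A
        · have hxn : |x n| ≤ ‖x‖ := by
            simpa [Real.norm_eq_abs] using x.norm_coe_le_norm n
          simp only [Set.indicator_of_mem hn, Set.indicator_of_mem (Set.mem_univ n),
            Pi.one_apply, mul_one]
          nlinarith
        · have hxn : |x n| < ε := by
            by_contra hcon
            exact hn (by simpa [hA] using not_lt.mp hcon)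
          simp only [Set.indicator_of_notMem hn, Set.indicator_of_mem (Set.mem_univ n),
            Pi.one_apply, mul_one, mul_zero]
          linarith
      have hξ := hpos _ hpt
      rw [map_sub, map_add, map_smul, map_smul, h1, hIz A (hx ε hε)] at hξ
      simp only [smul_eq_mul, mul_one, mul_zero, add_zero] at hξ
      linarith
    exact le_antisymm (by simpa using le_of_forall_pos_le_add hle) h0
  · intro h ε hε
    by_contra hA
    set A := {n : ℕ | ε ≤ |x n|} with hAdef
    let fI : Filter ℕ :=
      { sets := {s | sᶜ ∈ I}
        univ_sets := by simpa using hfin ∅ Set.finite_empty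
        sets_of_superset := fun {s t} hs hst =>
          hdown _ _ (Set.compl_subset_compl.mpr hst) hs
        inter_sets := fun {s t} hs ht => by
          simpa [Set.compl_inter] using hunion _ _ hs ht }
    have hmemfI : ∀ s : Set ℕ, s ∈ fI ↔ sᶜ ∈ I := fun s => Iff.rfl
    have hne : (fI ⊓ 𝓟 A).NeBot := by
      rw [Filter.inf_principal_neBot_iff]
      intro s hs
      rcases Set.eq_empty_or_nonempty (s ∩ A) with hemp | hnon
      · exact absurd (hdown A sᶜ (fun n hn => by
          by_contra hns
          exact Set.eq_empty_iff_forall_notMem.mp hemp n ⟨not_not.mp hns, hn⟩)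
          ((hmemfI s).mp hs)) hA
      · exact hnon
    let U : Ultrafilter ℕ := @Ultrafilter.of ℕ (fI ⊓ 𝓟 A) hne
    have hle : (U : Filter ℕ) ≤ fI ⊓ 𝓟 A := Ultrafilter.of_le _
    have hAU : A ∈ (U : Filter ℕ) := hle (mem_inf_of_right (mem_principal_self A))
    have hcomplU : ∀ B ∈ I, Bᶜ ∈ (U : Filter ℕ) := fun B hB =>
      hle (mem_inf_of_left ((hmemfI Bᶜ).mpr (by simpa using hB)))
    have hpos : ∀ y : ℕ →ᵇ ℝ, (∀ n : ℕ, 0 ≤ y n) → 0 ≤ ulimCLM U y := by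
      intro y hy
      exact (isClosed_Ici (a := (0:ℝ))).mem_of_tendsto (ulimCLM_tendsto U y)
        (Eventually.of_forall fun n => hy n)
    have h1 : ulimCLM U (indBCF Set.univ) = 1 := by
      rw [ulimCLM_apply]
      have heq : ⇑(indBCF Set.univ) = fun _ => (1:ℝ) := by
        funext n; simp [indBCF_apply]
      refine Tendsto.limUnder_eq ?_
      rw [heq]; exact tendsto_const_nhds
    have hIz : ∀ B ∈ I, ulimCLM U (indBCF B) = 0 := by
      intro B hB
      rw [ulimCLM_apply]
      refine Tendsto.limUnder_eq ?_
      have : Tendsto (fun _ : ℕ => (0:ℝ)) (U : Filter ℕ) (nhds 0) := tendsto_const_nhds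
      refine this.congr' ?_
      filter_upwards [hcomplU B hB] with n hn
      simp [indBCF_apply, Set.indicator_of_notMem hn]
    have hξ0 : ulimCLM U (absBCF x) = 0 := h (ulimCLM U) hpos h1 hIz
    have hεle : ε ≤ ulimCLM U (absBCF x) := by
      refine (isClosed_Ici (a := ε)).mem_of_tendsto (ulimCLM_tendsto U (absBCF x)) ?_
      filter_upwards [hAU] with n hn
      exact hn
    rw [hξ0] at hεle
    linarith
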